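/- arXiv:1512.08370 — 7 statements merged into one kernel-verified Lean document; each statement's English description precedes it below -/
import Mathlib

section
/- Let (a(t))_{t≥−1} be a sequence of real m-vectors, and define Q : ℕ → ℝᵐ by Q_k(0) = max{0, −a_k(−1)} and Q_k(t+1) = max{−a_k(t), Q_k(t) + a_k(t)} for all k and t ≥ 0. Then for every t ≥ 1, ‖Q(t)‖² ≥ ‖a(t−1)‖², where ‖·‖ is the Euclidean norm on ℝᵐ. -/
/-- For the virtual queue update of Algorithm 1,
`Q_k(0) = max{0, −a_k(−1)}` and `Q_k(t+1) = max{−a_k(t), Q_k(t) + a_k(t)}`,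
we have `‖Q(t)‖² ≥ ‖a(t−1)‖²` for all `t ≥ 1` (Euclidean norms). -/
theorem virtual_queue_norm_ge {m : ℕ}
    (a : ℤ → EuclideanSpace ℝ (Fin m))
    (Q : ℕ → EuclideanSpace ℝ (Fin m))
    (hQ0 : ∀ k : Fin m, Q 0 k = max 0 (-(a (-1) k)))
    (hQrec : ∀ (t : ℕ) (k : Fin m),
      Q (t + 1) k = max (-(a t k)) (Q t k + a t k)) :
    ∀ t : ℕ, 1 ≤ t → ‖a ((t : ℤ) - 1)‖ ^ 2 ≤ ‖Q t‖ ^ 2 := by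
  have hnonneg : ∀ t k, 0 ≤ Q t k := by
    intro t
    induction t with
    | zero => intro k; rw [hQ0 k]; exact le_max_left 0 _
    | succ n ih =>
      intro k
      rw [hQrec n k]
      by_contra h
      push_neg at h
      have h1 := max_lt_iff.mp h
      linarith [h1.1, h1.2, ih k]
  rintro t ht
  obtain ⟨s, rfl⟩ := Nat.exists_eq_add_of_le ht
  have key : ∀ k, |a ((1 + s : ℕ) - 1 : ℤ) k| ≤ Q (1 + s) k := by
    intro k
    have hs : ((1 + s : ℕ) - 1 : ℤ) = (s : ℤ) := by push_cast; ring
    rw [hs]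
    have := hQrec s k
    rw [show 1 + s = s + 1 from add_comm 1 s, this]
    rcases abs_cases (a (s : ℤ) k) with ⟨he, _⟩ | ⟨he, _⟩
    · rw [he]
      exact le_max_of_le_right (by linarith [hnonneg s k])
    · rw [he]; exact le_max_left _ _
  rw [EuclideanSpace.norm_eq, EuclideanSpace.norm_eq,
    Real.sq_sqrt (by positivity), Real.sq_sqrt (by positivity)]
  apply Finset.sum_le_sum
  intro k _
  have hk := key k
  have h2 : (0:ℝ) ≤ |a ((1 + s : ℕ) - 1 : ℤ) k| := abs_nonneg _
  calc ‖a ((1 + s : ℕ) - 1 : ℤ) k‖ ^ 2 = |a ((1 + s : ℕ) - 1 : ℤ) k| ^ 2 := by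
        rw [Real.norm_eq_abs]
    _ ≤ (Q (1 + s) k) ^ 2 := by nlinarith
    _ = ‖Q (1 + s) k‖ ^ 2 := by rw [Real.norm_eq_abs, sq_abs]
end

section
/- Let Q ∈ ℝᵐ with Q_k ≥ 0 for all k, let v ∈ ℝᵐ, and define Q' ∈ ℝᵐ by Q'_k = max{−v_k, Q_k + v_k} for each k ∈ {1,…,m}. Then (1/2)‖Q'‖² − (1/2)‖Q‖² ≤ ⟨Q, v⟩ + ‖v‖², where ‖·‖ and ⟨·,·⟩ are the Euclidean norm and inner product on ℝᵐ. -/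
open scoped RealInnerProductSpace

lemma sq_norm_eq {m : ℕ} (x : EuclideanSpace ℝ (Fin m)) :
    ‖x‖ ^ 2 = ∑ k, x k ^ 2 := by
  rw [EuclideanSpace.norm_eq, Real.sq_sqrt (by positivity)]
  simp [sq_abs]

/-- Lyapunov drift bound for Algorithm 1's virtual queue update: if `Q ∈ ℝᵐ`
is componentwise nonnegative and `Q'_k = max{−v_k, Q_k + v_k}`, then
`(1/2)‖Q'‖² − (1/2)‖Q‖² ≤ ⟨Q, v⟩ + ‖v‖²` (Euclidean norm and inner product). -/
theorem drift_bound {m : ℕ}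
    (Q v Q' : EuclideanSpace ℝ (Fin m))
    (hQ : ∀ k : Fin m, 0 ≤ Q k)
    (hQ' : ∀ k : Fin m, Q' k = max (-(v k)) (Q k + v k)) :
    (1 / 2) * ‖Q'‖ ^ 2 - (1 / 2) * ‖Q‖ ^ 2 ≤ ⟪Q, v⟫ + ‖v‖ ^ 2 := by
  have hinner : ⟪Q, v⟫ = ∑ k, Q k * v k := by
    simp [PiLp.inner_apply, RCLike.inner_apply, mul_comm]
  have hpt : ∀ k, Q' k ^ 2 ≤ Q k ^ 2 + 2 * (Q k * v k) + 2 * v k ^ 2 := by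
    intro k
    rw [hQ' k]
    rcases max_cases (-(v k)) (Q k + v k) with ⟨h, _⟩ | ⟨h, _⟩ <;> rw [h] <;> nlinarith [hQ k, sq_nonneg (Q k + v k), sq_nonneg (v k)]
  have hsum : ∑ k, Q' k ^ 2 ≤ ∑ k, (Q k ^ 2 + 2 * (Q k * v k) + 2 * v k ^ 2) :=
    Finset.sum_le_sum fun k _ => hpt k
  rw [sq_norm_eq, sq_norm_eq, sq_norm_eq, hinner]
  simp only [Finset.sum_add_distrib, ← Finset.mul_sum] at hsum
  linarith
end

section
/- Let 𝒳 ⊆ ℝⁿ be a convex set, let f : ℝⁿ → ℝ be convex on 𝒳, let g = (g₁,…,g_m) : ℝⁿ → ℝᵐ have each component g_k convex on 𝒳 and satisfy ‖g(u) − g(v)‖ ≤ β‖u − v‖ for all u, v ∈ 𝒳, and let α ≥ β²/2. Suppose: x_prev ∈ 𝒳; Q ∈ ℝᵐ satisfies Q_k + g_k(x_prev) ≥ 0 for all k; x_new ∈ 𝒳 minimizes x ↦ f(x) + ⟨Q + g(x_prev), g(x)⟩ + α‖x − x_prev‖² over 𝒳; Q' ∈ ℝᵐ is given by Q'_k = max{−g_k(x_new),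 Q_k + g_k(x_new)}; and x* ∈ 𝒳 satisfies g_k(x*) ≤ 0 for all k. Then (1/2)‖Q'‖² − (1/2)‖Q‖² + f(x_new) ≤ f(x*) + α(‖x* − x_prev‖² − ‖x* − x_new‖²) + (1/2)(‖g(x_new)‖² − ‖g(x_prev)‖²). -/
set_option maxHeartbeats 1000000


open scoped RealInnerProductSpace

private lemma combo_norm_sq {E : Type*} [NormedAddCommGroup E] [InnerProductSpace ℝ E]
    (a b : E) (t : ℝ) :
    ‖(1-t)•a + t•b‖^2 = (1-t)*‖a‖^2 + t*‖b‖^2 - t*(1-t)*‖a-b‖^2 := by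
  have h : ∀ v : E, ‖v‖^2 = ⟪v,v⟫ := fun v => (real_inner_self_eq_norm_sq v).symm
  simp only [h, inner_add_left, inner_add_right, inner_sub_left, inner_sub_right,
    real_inner_smul_left, real_inner_smul_right, real_inner_comm a b]
  ring

/-- Drift-plus-penalty bound for one iteration of Algorithm 1 (Lemma 7 of the
paper): under the stated conditions,
`(1/2)‖Q'‖² − (1/2)‖Q‖² + f(x_new)
  ≤ f(x*) + α(‖x* − x_prev‖² − ‖x* − x_new‖²) + (1/2)(‖g(x_new)‖² − ‖g(x_prev)‖²)`. -/
theorem drift_plus_penalty_bound {n m : ℕ}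
    (X : Set (EuclideanSpace ℝ (Fin n))) (hXconv : Convex ℝ X)
    (f : EuclideanSpace ℝ (Fin n) → ℝ) (hf : ConvexOn ℝ X f)
    (g : EuclideanSpace ℝ (Fin n) → EuclideanSpace ℝ (Fin m))
    (hg : ∀ k : Fin m, ConvexOn ℝ X (fun x => g x k))
    (β : ℝ) (hLip : ∀ u ∈ X, ∀ v ∈ X, ‖g u - g v‖ ≤ β * ‖u - v‖)
    (α : ℝ) (hα : β ^ 2 / 2 ≤ α)
    (xprev : EuclideanSpace ℝ (Fin n)) (hxprev : xprev ∈ X)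
    (Q : EuclideanSpace ℝ (Fin m)) (hQ : ∀ k : Fin m, 0 ≤ Q k + g xprev k)
    (xnew : EuclideanSpace ℝ (Fin n)) (hxnew : xnew ∈ X)
    (hmin : ∀ x ∈ X,
      f xnew + ⟪Q + g xprev, g xnew⟫ + α * ‖xnew - xprev‖ ^ 2 ≤
        f x + ⟪Q + g xprev, g x⟫ + α * ‖x - xprev‖ ^ 2)
    (Q' : EuclideanSpace ℝ (Fin m))
    (hQ' : ∀ k : Fin m, Q' k = max (-(g xnew k)) (Q k + g xnew k))
    (xs : EuclideanSpace ℝ (Fin n)) (hxs : xs ∈ X)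
    (hfeas : ∀ k : Fin m, g xs k ≤ 0) :
    (1 / 2) * ‖Q'‖ ^ 2 - (1 / 2) * ‖Q‖ ^ 2 + f xnew ≤
      f xs + α * (‖xs - xprev‖ ^ 2 - ‖xs - xnew‖ ^ 2) +
        (1 / 2) * (‖g xnew‖ ^ 2 - ‖g xprev‖ ^ 2) := by
  have hα0 : (0:ℝ) ≤ α := le_trans (by positivity) hα
  set gp := g xprev with hgp
  set gn := g xnew with hgn
  set c := Q + gp with hc
  have hc_app : ∀ k, c k = Q k + gp k := fun k => rfl
  have hinner : ∀ v w : EuclideanSpace ℝ (Fin m), ⟪v, w⟫ = ∑ k, v k * w k := by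
    intro v w; simp [PiLp.inner_apply, RCLike.inner_apply]; exact Finset.sum_congr rfl fun k _ => mul_comm _ _
  have normsq : ∀ v : EuclideanSpace ℝ (Fin m), ‖v‖^2 = ∑ k, (v k)^2 := by
    intro v
    rw [← real_inner_self_eq_norm_sq, hinner]
    simp [sq]
  -- Step A: drift bound
  have hA : ‖Q'‖^2 ≤ ‖gn‖^2 + ‖Q + gn‖^2 := by
    rw [normsq, normsq, normsq, ← Finset.sum_add_distrib]
    refine Finset.sum_le_sum fun k _ => ?_
    rw [hQ' k]
    have hadd : (Q + gn) k = Q k + gn k := rfl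
    rw [hadd]
    rcases max_cases (-(gn k)) (Q k + gn k) with ⟨h, _⟩ | ⟨h, _⟩ <;> rw [h] <;>
      nlinarith [sq_nonneg (gn k), sq_nonneg (Q k + gn k)]
  have hQgn : ‖Q + gn‖^2 = ‖Q‖^2 + 2*⟪Q,gn⟫ + ‖gn‖^2 := norm_add_sq_real Q gn
  -- convexity of the penalized objective (without the proximal term)
  have hcnn : ∀ k, 0 ≤ c k := fun k => hQ k
  have hlin : ConvexOn ℝ X (fun x => ⟪c, g x⟫) := by
    refine ⟨hXconv, fun x hx y hy a b ha hb hab => ?_⟩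
    simp only [smul_eq_mul, hinner]
    calc ∑ k, c k * g (a•x + b•y) k
        ≤ ∑ k, c k * (a * g x k + b * g y k) := by
          refine Finset.sum_le_sum fun k _ => mul_le_mul_of_nonneg_left ?_ (hcnn k)
          have := (hg k).2 hx hy ha hb hab
          simpa using this
      _ = a * (∑ k, c k * g x k) + b * (∑ k, c k * g y k) := by
          rw [Finset.mul_sum, Finset.mul_sum, ← Finset.sum_add_distrib]
          exact Finset.sum_congr rfl fun k _ => by ring
  have hψ : ConvexOn ℝ X (fun x => f x + ⟪c, g x⟫) := hf.add hlin
  -- Step B: pushback of the strongly convex minimization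
  have push : ∀ y ∈ X,
      f xnew + ⟪c, gn⟫ + α*‖xnew - xprev‖^2 + α*‖y - xnew‖^2 ≤
        f y + ⟪c, g y⟫ + α*‖y - xprev‖^2 := by
    intro y hy
    refine le_of_forall_pos_le_add fun ε hε => ?_
    set C := α * ‖y - xnew‖^2 with hCdef
    have hC0 : 0 ≤ C := by positivity
    set t : ℝ := min (1/2) (ε/(C+1)) with htdef
    have ht0 : 0 < t := lt_min (by norm_num) (div_pos hε (by linarith))
    have ht1 : t ≤ 1/2 := min_le_left _ _
    have htC : t * C ≤ ε := by
      have h1 : t ≤ ε/(C+1) := min_le_right _ _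
      have : t * C ≤ (ε/(C+1)) * C := mul_le_mul_of_nonneg_right h1 hC0
      have h2 : (ε/(C+1)) * C ≤ ε := by
        rw [div_mul_eq_mul_div, div_le_iff₀ (by linarith : (0:ℝ) < C + 1)]
        nlinarith
      linarith
    set z := (1-t)•xnew + t•y with hzdef
    have hz : z ∈ X := hXconv hxnew hy (by linarith) ht0.le (by ring)
    have hm := hmin z hz
    have hcvx := hψ.2 hxnew hy (by linarith : (0:ℝ) ≤ 1 - t) ht0.le (by ring)
    simp only [smul_eq_mul] at hcvx
    have hnorm : ‖z - xprev‖^2 =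
        (1-t)*‖xnew - xprev‖^2 + t*‖y - xprev‖^2 - t*(1-t)*‖y - xnew‖^2 := by
      have hz2 : z - xprev = (1-t)•(xnew - xprev) + t•(y - xprev) := by
        rw [hzdef]; module
      rw [hz2, combo_norm_sq]
      have : (xnew - xprev) - (y - xprev) = xnew - y := by module
      rw [this, norm_sub_rev xnew y]
    set A := f xnew + ⟪c, gn⟫ with hA'
    set B := f y + ⟪c, g y⟫ with hB'
    set P := ‖xnew - xprev‖^2 with hP'
    set Y := ‖y - xprev‖^2 with hY'
    set D := ‖y - xnew‖^2 with hD'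
    rw [← hzdef] at hcvx
    have hcomb : A + α*P ≤ (1-t)*A + t*B + α*((1-t)*P + t*Y - t*(1-t)*D) := by
      calc A + α*P ≤ (f z + ⟪c, g z⟫) + α*‖z - xprev‖^2 := hm
        _ ≤ ((1-t)*A + t*B) + α*((1-t)*P + t*Y - t*(1-t)*D) := by
            rw [hnorm]; linarith [hcvx]
    have h0 : t * (A + α*P + α*(1-t)*D - (B + α*Y)) ≤ t * 0 := by nlinarith [hcomb]
    have hx2 : A + α*P + α*(1-t)*D - (B + α*Y) ≤ 0 := le_of_mul_le_mul_left (by linarith) ht0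
    have : α*(1-t)*D = α*D - t*C := by rw [hCdef, hD']; ring
    linarith [htC, hx2, this.symm.le]
  -- Step C: feasibility of xs
  have hCfeas : ⟪c, g xs⟫ ≤ 0 := by
    rw [hinner]
    refine Finset.sum_nonpos fun k _ => mul_nonpos_of_nonneg_of_nonpos (hcnn k) (hfeas k)
  -- Step D: Lipschitz bound
  have hLq : ‖gn - gp‖^2 ≤ 2*α*‖xnew - xprev‖^2 := by
    have h1 := hLip xnew hxnew xprev hxprev
    have h2 : ‖gn - gp‖^2 ≤ (β * ‖xnew - xprev‖)^2 := by
      have := norm_nonneg (gn - gp)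
      nlinarith
    have h3 : (β * ‖xnew - xprev‖)^2 = β^2 * ‖xnew - xprev‖^2 := by ring
    nlinarith [sq_nonneg ‖xnew - xprev‖]
  have hpolar : ‖gn - gp‖^2 = ‖gn‖^2 - 2*⟪gp,gn⟫ + ‖gp‖^2 := by
    rw [norm_sub_sq_real, real_inner_comm]
  have hsplit : ⟪c, gn⟫ = ⟪Q, gn⟫ + ⟪gp, gn⟫ := by rw [hc, inner_add_left]
  have hpush := push xs hxs
  linarith [hA, hQgn, hpush, hCfeas, hLq, hpolar, hsplit]
end

section
/- Consider Algorithm 1 applied to the convex program min{f(x) : g_k(x) ≤ 0 ∀k ∈ {1,…,m}, x ∈ 𝒳} with parameter α ≥ β²/2, where β is the Lipschitz modulus of g on 𝒳, and let x* ∈ 𝒳 be an optimal solution of the program. Then for all t ≥ 1, ∑_{τ=0}^{t−1} f(x(τ)) ≤ t·f(x*) + α‖x* − x(−1)‖². -/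
open scoped RealInnerProductSpace

set_option maxHeartbeats 1000000 in
theorem alg1_objective_sum_bound
    {n m : ℕ}
    (X : Set (EuclideanSpace ℝ (Fin n))) (hXconv : Convex ℝ X) (hXcl : IsClosed X)
    (f : EuclideanSpace ℝ (Fin n) → ℝ) (hf : ConvexOn ℝ X f) (hfc : ContinuousOn f X)
    (g : EuclideanSpace ℝ (Fin n) → EuclideanSpace ℝ (Fin m))
    (hg : ∀ k : Fin m, ConvexOn ℝ X (fun z => g z k))
    (β : ℝ) (hLip : ∀ u ∈ X, ∀ v ∈ X, ‖g u - g v‖ ≤ β * ‖u - v‖)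
    (α : ℝ) (hα : β ^ 2 / 2 ≤ α)
    (x : ℤ → EuclideanSpace ℝ (Fin n)) (hxm1 : x (-1) ∈ X)
    (Q : ℕ → EuclideanSpace ℝ (Fin m))
    (hQ0 : ∀ k : Fin m, Q 0 k = max 0 (-(g (x (-1)) k)))
    (hxmem : ∀ t : ℕ, x t ∈ X)
    (hmin : ∀ t : ℕ, ∀ z ∈ X,
      f (x t) + ⟪Q t + g (x ((t : ℤ) - 1)), g (x t)⟫ + α * ‖x t - x ((t : ℤ) - 1)‖ ^ 2 ≤
        f z + ⟪Q t + g (x ((t : ℤ) - 1)), g z⟫ + α * ‖z - x ((t : ℤ) - 1)‖ ^ 2)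
    (hQrec : ∀ (t : ℕ) (k : Fin m),
      Q (t + 1) k = max (-(g (x t) k)) (Q t k + g (x t) k))
    (xs : EuclideanSpace ℝ (Fin n)) (hxs : xs ∈ X)
    (hfeas : ∀ k : Fin m, g xs k ≤ 0)
    (hopt : ∀ z ∈ X, (∀ k : Fin m, g z k ≤ 0) → f xs ≤ f z)
    :
    ∀ t : ℕ, 1 ≤ t → ∑ τ ∈ Finset.range t, f (x τ) ≤ (t : ℝ) * f xs + α * ‖xs - x (-1)‖ ^ 2 := by
  have hα0 : (0:ℝ) ≤ α := le_trans (by positivity) hα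
  -- y t = x (t-1)
  obtain ⟨y, hY⟩ : ∃ y : ℕ → EuclideanSpace ℝ (Fin n), ∀ t : ℕ, y t = x ((t : ℤ) - 1) :=
    ⟨_, fun _ => rfl⟩
  have hy0 : y 0 = x (-1) := by rw [hY]; norm_num
  have hysucc : ∀ t : ℕ, y (t + 1) = x t := by
    intro t; rw [hY]; congr 1; push_cast; ring
  have hymem : ∀ t, y t ∈ X := by
    intro t
    cases t with
    | zero => rw [hy0]; exact hxm1
    | succ s => rw [hysucc]; exact hxmem s
  -- inner product and norm expansions
  have innerE : ∀ (u v : EuclideanSpace ℝ (Fin m)), ⟪u, v⟫ = ∑ i, u i * v i := by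
    intro u v; simp [PiLp.inner_apply, RCLike.inner_apply, conj_trivial]
    exact Finset.sum_congr rfl fun i _ => mul_comm _ _
  have normsqE : ∀ (u : EuclideanSpace ℝ (Fin m)), ‖u‖ ^ 2 = ∑ i, (u i) ^ 2 := by
    intro u
    rw [← real_inner_self_eq_norm_sq]
    simp only [PiLp.inner_apply, RCLike.inner_apply, conj_trivial, sq]
  -- Q is nonnegative
  have hQpos : ∀ t k, 0 ≤ Q t k := by
    intro t
    induction t with
    | zero => intro k; rw [hQ0 k]; exact le_max_left _ _
    | succ s ih =>
      intro k
      rw [hQrec s k]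
      rcases le_or_gt 0 (g (x s) k) with h | h
      · exact le_max_of_le_right (by linarith [ih k])
      · exact le_max_of_le_left (by linarith)
  -- Q t + g (y t) is nonnegative
  have hQg : ∀ t k, 0 ≤ Q t k + g (y t) k := by
    intro t k
    cases t with
    | zero =>
      rw [hy0, hQ0 k]
      have := le_max_right (0:ℝ) (-(g (x (-1)) k)); linarith
    | succ s =>
      rw [hysucc, hQrec s k]
      have := le_max_left (-(g (x s) k)) (Q s k + g (x s) k); linarith
  -- drift bound
  have hdrift : ∀ t : ℕ, ‖Q (t+1)‖ ^ 2 ≤ ‖Q t‖ ^ 2 + 2 * ⟪Q t + g (x t), g (x t)⟫ := by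
    intro t
    rw [innerE, normsqE, normsqE, Finset.mul_sum, ← Finset.sum_add_distrib]
    apply Finset.sum_le_sum
    intro k _
    rw [hQrec t k]
    have hcomp : (Q t + g (x t)) k = Q t k + g (x t) k := rfl
    rw [hcomp]
    rcases max_cases (-(g (x t) k)) (Q t k + g (x t) k) with ⟨he, _⟩ | ⟨he, _⟩ <;> rw [he] <;>
      nlinarith [sq_nonneg (Q t k + g (x t) k), sq_nonneg (g (x t) k)]
  -- componentwise norm comparison
  have hnormcmp : ∀ (a b : EuclideanSpace ℝ (Fin m)), (∀ k, a k ^ 2 ≤ b k ^ 2) →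
      ‖a‖ ^ 2 ≤ ‖b‖ ^ 2 := by
    intro a b h
    rw [normsqE, normsqE]
    exact Finset.sum_le_sum fun k _ => h k
  -- pushback lemma
  have hpush : ∀ t : ℕ,
      f (x t) + ⟪Q t + g (y t), g (x t)⟫ + α * ‖x t - y t‖ ^ 2 + α * ‖xs - x t‖ ^ 2 ≤
        f xs + ⟪Q t + g (y t), g xs⟫ + α * ‖xs - y t‖ ^ 2 := by
    intro t
    have key : ∀ l : ℝ, 0 < l → l ≤ 1 →
        f (x t) + ⟪Q t + g (y t), g (x t)⟫ + α * ‖x t - y t‖ ^ 2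
          + α * (1 - l) * ‖xs - x t‖ ^ 2 ≤
        f xs + ⟪Q t + g (y t), g xs⟫ + α * ‖xs - y t‖ ^ 2 := by
      intro l hl0 hl1
      set z := (1 - l) • (x t) + l • xs with hz
      have hzX : z ∈ X := hXconv (hxmem t) hxs (by linarith) hl0.le (by ring)
      have hmin' := hmin t z hzX
      rw [← hY t] at hmin'
      have hfz : f z ≤ (1 - l) * f (x t) + l * f xs :=
        hf.2 (hxmem t) hxs (by linarith) hl0.le (by ring)
      have hgz : ⟪Q t + g (y t), g z⟫ ≤
          (1 - l) * ⟪Q t + g (y t), g (x t)⟫ + l * ⟪Q t + g (y t), g xs⟫ := by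
        rw [innerE, innerE, innerE, Finset.mul_sum, Finset.mul_sum, ← Finset.sum_add_distrib]
        apply Finset.sum_le_sum
        intro k _
        have hc := hQg t k
        have hgk : g z k ≤ (1 - l) * g (x t) k + l * g xs k :=
          (hg k).2 (hxmem t) hxs (by linarith) hl0.le (by ring)
        have hcomp : (Q t + g (y t)) k = Q t k + g (y t) k := rfl
        rw [hcomp]
        nlinarith [hgk, hc]
      have hnz : ‖z - y t‖ ^ 2 = (1 - l) * ‖x t - y t‖ ^ 2 + l * ‖xs - y t‖ ^ 2
          - l * (1 - l) * ‖xs - x t‖ ^ 2 := by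
        have h1 : z - y t = (1 - l) • (x t - y t) + l • (xs - y t) := by
          rw [hz]; module
        have h2 : ∀ (u v : EuclideanSpace ℝ (Fin n)),
            ‖(1 - l) • u + l • v‖ ^ 2 =
              (1 - l) * ‖u‖ ^ 2 + l * ‖v‖ ^ 2 - l * (1 - l) * ‖u - v‖ ^ 2 := by
          intro u v
          rw [← real_inner_self_eq_norm_sq, ← real_inner_self_eq_norm_sq,
            ← real_inner_self_eq_norm_sq, ← real_inner_self_eq_norm_sq]
          simp only [inner_add_add_self, inner_sub_sub_self, real_inner_smul_left,
            real_inner_smul_right, real_inner_comm u v]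
          ring
        rw [h1, h2]
        have h3 : (x t - y t) - (xs - y t) = x t - xs := by abel
        rw [h3, ← norm_neg (x t - xs)]
        have h4 : -(x t - xs) = xs - x t := by abel
        rw [h4]
      rw [hnz] at hmin'
      have h5 := hmin'
      have h6 : l * (f (x t) + ⟪Q t + g (y t), g (x t)⟫ + α * ‖x t - y t‖ ^ 2
            + α * (1 - l) * ‖xs - x t‖ ^ 2) ≤
          l * (f xs + ⟪Q t + g (y t), g xs⟫ + α * ‖xs - y t‖ ^ 2) := by
        nlinarith [h5, hfz, hgz, hl0.le]
      have := le_of_mul_le_mul_left h6 hl0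
      linarith
    -- limiting argument
    have key2 : ∀ ε : ℝ, 0 < ε →
        f (x t) + ⟪Q t + g (y t), g (x t)⟫ + α * ‖x t - y t‖ ^ 2 + α * ‖xs - x t‖ ^ 2 ≤
          f xs + ⟪Q t + g (y t), g xs⟫ + α * ‖xs - y t‖ ^ 2 + ε := by
      intro ε hε
      set C := ‖xs - x t‖ ^ 2 with hC
      have hC0 : 0 ≤ C := sq_nonneg _
      have hD0 : 0 < α * C + ε := by positivity
      set l := min 1 (ε / (α * C + ε)) with hl
      have hl0 : 0 < l := lt_min one_pos (by positivity)
      have hl1 : l ≤ 1 := min_le_left _ _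
      have hle : l * (α * C + ε) ≤ ε := by
        have : l ≤ ε / (α * C + ε) := min_le_right _ _
        calc l * (α * C + ε) ≤ (ε / (α * C + ε)) * (α * C + ε) :=
              mul_le_mul_of_nonneg_right this hD0.le
          _ = ε := by field_simp
      have hlc : l * (α * C) ≤ ε := by nlinarith [mul_pos hl0 hε]
      have := key l hl0 hl1
      nlinarith [this]
    exact le_of_forall_pos_le_add key2
  -- feasibility term
  have hfeasterm : ∀ t : ℕ, ⟪Q t + g (y t), g xs⟫ ≤ 0 := by
    intro t
    rw [innerE]
    apply Finset.sum_nonpos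
    intro k _
    have hcomp : (Q t + g (y t)) k = Q t k + g (y t) k := rfl
    rw [hcomp]
    exact mul_nonpos_of_nonneg_of_nonpos (hQg t k) (hfeas k)
  -- potential function
  obtain ⟨F, hF⟩ : ∃ F : ℕ → ℝ, ∀ t : ℕ,
      F t = ‖Q t‖ ^ 2 / 2 + α * ‖xs - y t‖ ^ 2 - ‖g (y t)‖ ^ 2 / 2 := ⟨_, fun _ => rfl⟩
  -- per-step bound
  have hstep : ∀ t : ℕ, f (x t) ≤ f xs + (F t - F (t + 1)) := by
    intro t
    rw [hF, hF, hysucc t]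
    have haux : ⟪Q t + g (x t), g (x t)⟫ - ⟪Q t + g (y t), g (x t)⟫ =
        ⟪g (x t) - g (y t), g (x t)⟫ := by
      rw [inner_add_left, inner_add_left, inner_sub_left]; ring
    have hcross : ⟪g (x t) - g (y t), g (x t)⟫ =
        ‖g (x t) - g (y t)‖ ^ 2 / 2 + ‖g (x t)‖ ^ 2 / 2 - ‖g (y t)‖ ^ 2 / 2 := by
      rw [← real_inner_self_eq_norm_sq, ← real_inner_self_eq_norm_sq,
        ← real_inner_self_eq_norm_sq, inner_sub_left, inner_sub_sub_self,
        real_inner_comm (g (y t)) (g (x t))]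
      ring
    have hL := hLip (x t) (hxmem t) (y t) (hymem t)
    have hL2 : ‖g (x t) - g (y t)‖ ^ 2 ≤ β ^ 2 * ‖x t - y t‖ ^ 2 := by
      nlinarith [norm_nonneg (g (x t) - g (y t)), norm_nonneg (x t - y t)]
    have hprod : 0 ≤ (α - β ^ 2 / 2) * ‖x t - y t‖ ^ 2 :=
      mul_nonneg (by linarith) (sq_nonneg _)
    linarith [hpush t, hfeasterm t, hdrift t, haux, hcross, hL2, hprod]
  -- conclusion
  intro T hT
  obtain ⟨s, rfl⟩ : ∃ s : ℕ, T = s + 1 := ⟨T - 1, by omega⟩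
  have hsum : ∑ τ ∈ Finset.range (s + 1), f (x τ) ≤
      ∑ τ ∈ Finset.range (s + 1), (f xs + (F τ - F (τ + 1))) :=
    Finset.sum_le_sum fun τ _ => hstep τ
  rw [Finset.sum_add_distrib, Finset.sum_const, Finset.sum_range_sub', Finset.card_range,
    nsmul_eq_mul] at hsum
  have hF0 : F 0 ≤ α * ‖xs - x (-1)‖ ^ 2 := by
    rw [hF, hy0]
    have : ‖Q 0‖ ^ 2 ≤ ‖g (x (-1))‖ ^ 2 := by
      apply hnormcmp
      intro k
      rw [hQ0 k]
      rcases max_cases (0:ℝ) (-(g (x (-1)) k)) with ⟨he, h2⟩ | ⟨he, h2⟩ <;> rw [he] <;> nlinarith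
    linarith
  have hFT : 0 ≤ F (s + 1) := by
    rw [hF, hysucc s]
    have : ‖g (x s)‖ ^ 2 ≤ ‖Q (s + 1)‖ ^ 2 := by
      apply hnormcmp
      intro k
      rw [hQrec s k]
      have hq := hQpos s k
      rcases max_cases (-(g (x s) k)) (Q s k + g (x s) k) with ⟨he, h2⟩ | ⟨he, h2⟩ <;> rw [he] <;>
        nlinarith
    have h0 : 0 ≤ α * ‖xs - x s‖ ^ 2 := mul_nonneg hα0 (sq_nonneg _)
    linarith
  have : (↑(s + 1) : ℝ) * f xs + (F 0 - F (s + 1)) ≤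
      (↑(s + 1) : ℝ) * f xs + α * ‖xs - x (-1)‖ ^ 2 := by linarith
  linarith
end

section
/- Consider Algorithm 1 applied to the convex program min{f(x) : g_k(x) ≤ 0 ∀k ∈ {1,…,m}, x ∈ 𝒳} with parameter α > β²/2, where β is the Lipschitz modulus of g on 𝒳, and let x* ∈ 𝒳 be an optimal solution of the program. Then for all t ≥ 1, ∑_{τ=0}^{t−1} f(x(τ)) ≤ t·f(x*) + α‖x* − x(−1)‖² + (α/(2α − β²))‖g(x*)‖² − (1/2)‖Q(t)‖². -/
open scoped RealInnerProductSpace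

lemma inner_eq_sum {m : ℕ} (v w : EuclideanSpace ℝ (Fin m)) :
    ⟪v, w⟫ = ∑ k, v k * w k := by
  simp [PiLp.inner_apply, RCLike.inner_apply, starRingEnd_apply, mul_comm]

lemma normsq_eq_sum {m : ℕ} (v : EuclideanSpace ℝ (Fin m)) :
    ‖v‖ ^ 2 = ∑ k, (v k) ^ 2 := by
  rw [← real_inner_self_eq_norm_sq, inner_eq_sum]
  exact Finset.sum_congr rfl (fun k _ => (sq (v k)).symm ▸ rfl)

lemma interp_normsq {n : ℕ} (u v : EuclideanSpace ℝ (Fin n)) (θ : ℝ) :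
    ‖(1-θ) • u + θ • v‖ ^ 2 = (1-θ) * ‖u‖^2 + θ * ‖v‖^2 - θ*(1-θ) * ‖u - v‖^2 := by
  have h1 := norm_add_sq_real ((1-θ) • u) (θ • v)
  have h2 := norm_sub_sq_real u v
  have h3 : ⟪(1-θ) • u, θ • v⟫ = (1-θ) * (θ * ⟪u, v⟫) := by
    rw [real_inner_smul_left, real_inner_smul_right]
  have h4 : ‖(1-θ) • u‖^2 = (1-θ)^2 * ‖u‖^2 := by
    rw [norm_smul]; simp [Real.norm_eq_abs, mul_pow, sq_abs]
  have h5 : ‖θ • v‖^2 = θ^2 * ‖v‖^2 := by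
    rw [norm_smul]; simp [Real.norm_eq_abs, mul_pow, sq_abs]
  rw [h1, h3, h4, h5, h2]; ring

lemma strong_min {n : ℕ} {X : Set (EuclideanSpace ℝ (Fin n))} (hX : Convex ℝ X)
    {h : EuclideanSpace ℝ (Fin n) → ℝ} {α : ℝ} (hα : 0 < α)
    {a p z : EuclideanSpace ℝ (Fin n)} (hp : p ∈ X) (hz : z ∈ X)
    (hconv : ∀ θ : ℝ, 0 ≤ θ → θ ≤ 1 → h ((1-θ)•p + θ•z) ≤ (1-θ)*h p + θ*h z)
    (hmin : ∀ w ∈ X, h p + α*‖p - a‖^2 ≤ h w + α*‖w - a‖^2) :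
    h p + α*‖p - a‖^2 + α*‖z - p‖^2 ≤ h z + α*‖z - a‖^2 := by
  have hC : (0:ℝ) ≤ α*‖z-p‖^2 := by positivity
  refine le_of_forall_pos_le_add ?_
  intro ε hε
  set C := α*‖z - p‖^2 with hCdef
  set θ := min 1 (ε / (C+1)) with hθdef
  have hθpos : 0 < θ := lt_min one_pos (div_pos hε (by positivity))
  have hθ1 : θ ≤ 1 := min_le_left _ _
  have hw : (1-θ)•p + θ•z ∈ X := hX hp hz (by linarith) (le_of_lt hθpos) (by ring)
  have key := hmin _ hw
  have hcc := hconv θ (le_of_lt hθpos) hθ1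
  have hq : ‖(1-θ)•p + θ•z - a‖^2
      = (1-θ)*‖p-a‖^2 + θ*‖z-a‖^2 - θ*(1-θ)*‖z - p‖^2 := by
    have hv : (1-θ)•p + θ•z - a = (1-θ)•(p-a) + θ•(z-a) := by module
    rw [hv, interp_normsq, show (p-a)-(z-a) = p - z from by abel, norm_sub_rev p z]
  rw [hq] at key
  have key2 : θ * (h p + α*‖p-a‖^2 + α*(1-θ)*‖z-p‖^2) ≤ θ * (h z + α*‖z-a‖^2) := by
    nlinarith [key, hcc]
  have hdiv := le_of_mul_le_mul_left key2 hθpos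
  have hθC : θ * C ≤ ε := by
    have h1 : θ ≤ ε/(C+1) := min_le_right _ _
    calc θ * C ≤ ε/(C+1) * C := mul_le_mul_of_nonneg_right h1 hC
      _ ≤ ε := by rw [div_mul_eq_mul_div, div_le_iff₀ (by positivity)]; nlinarith
  have : α*(1-θ)*‖z-p‖^2 = C - θ*C := by rw [hCdef]; ring
  linarith [hdiv, hθC]

lemma drift_lemma {m : ℕ} (Q : ℕ → EuclideanSpace ℝ (Fin m))
    (v : ℕ → EuclideanSpace ℝ (Fin m))
    (hrec : ∀ (t : ℕ) (k : Fin m), Q (t+1) k = max (-(v t k)) (Q t k + v t k)) :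
    ∀ t : ℕ, (1/2)*‖Q (t+1)‖^2 ≤ (1/2)*‖Q t‖^2 + ⟪Q t, v t⟫ + ‖v t‖^2 := by
  intro t
  have pc : ∀ k : Fin m,
      (1/2)*(Q (t+1) k)^2 ≤ (1/2)*(Q t k)^2 + Q t k * v t k + (v t k)^2 := by
    intro k
    rcases le_total (-(v t k)) (Q t k + v t k) with hc | hc
    · rw [hrec t k, max_eq_right hc]; nlinarith [sq_nonneg (v t k)]
    · rw [hrec t k, max_eq_left hc]; nlinarith [sq_nonneg (Q t k + v t k)]
  rw [normsq_eq_sum, normsq_eq_sum, normsq_eq_sum, inner_eq_sum, Finset.mul_sum,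
    Finset.mul_sum, ← Finset.sum_add_distrib, ← Finset.sum_add_distrib]
  exact Finset.sum_le_sum (fun k _ => pc k)

lemma innid_lemma {m : ℕ} (q a b : EuclideanSpace ℝ (Fin m)) :
    ⟪q, b⟫ + ‖b‖^2 = ⟪q + a, b⟫ + (1/2)*‖b‖^2 - (1/2)*‖a‖^2 + (1/2)*‖b - a‖^2 := by
  have h1 : ⟪q + a, b⟫ = ⟪q, b⟫ + ⟪a, b⟫ := inner_add_left q a b
  have h2 := norm_sub_sq_real b a
  have h3 : ⟪a, b⟫ = ⟪b, a⟫ := real_inner_comm b a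
  linarith

lemma conv_comb_lemma {n m : ℕ} {X : Set (EuclideanSpace ℝ (Fin n))}
    {f : EuclideanSpace ℝ (Fin n) → ℝ} (hf : ConvexOn ℝ X f)
    {g : EuclideanSpace ℝ (Fin n) → EuclideanSpace ℝ (Fin m)}
    (hg : ∀ k : Fin m, ConvexOn ℝ X (fun z => g z k))
    {c : EuclideanSpace ℝ (Fin m)} (hc : ∀ k, 0 ≤ c k)
    {p z : EuclideanSpace ℝ (Fin n)} (hp : p ∈ X) (hz : z ∈ X) :
    ∀ θ : ℝ, 0 ≤ θ → θ ≤ 1 →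
      f ((1-θ)•p + θ•z) + ⟪c, g ((1-θ)•p + θ•z)⟫ ≤
        (1-θ)*(f p + ⟪c, g p⟫) + θ*(f z + ⟪c, g z⟫) := by
  intro θ h0 h1
  have hfp := hf.2 hp hz (by linarith : (0:ℝ) ≤ 1-θ) h0 (by ring)
  simp only [smul_eq_mul] at hfp
  have hgp : ⟪c, g ((1-θ)•p + θ•z)⟫ ≤ (1-θ)*⟪c, g p⟫ + θ*⟪c, g z⟫ := by
    rw [inner_eq_sum, inner_eq_sum, inner_eq_sum, Finset.mul_sum, Finset.mul_sum,
      ← Finset.sum_add_distrib]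
    apply Finset.sum_le_sum
    intro k _
    have hk := (hg k).2 hp hz (by linarith : (0:ℝ) ≤ 1-θ) h0 (by ring)
    simp only [smul_eq_mul] at hk
    nlinarith [mul_le_mul_of_nonneg_left hk (hc k)]
  nlinarith [hfp, hgp]

lemma step_lemma {n m : ℕ} {X : Set (EuclideanSpace ℝ (Fin n))} (hXconv : Convex ℝ X)
    {f : EuclideanSpace ℝ (Fin n) → ℝ} (hf : ConvexOn ℝ X f)
    {g : EuclideanSpace ℝ (Fin n) → EuclideanSpace ℝ (Fin m)}
    (hg : ∀ k : Fin m, ConvexOn ℝ X (fun z => g z k))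
    {β α : ℝ} (hα : β ^ 2 / 2 < α)
    (hLip : ∀ u ∈ X, ∀ v ∈ X, ‖g u - g v‖ ≤ β * ‖u - v‖)
    {q Qn : EuclideanSpace ℝ (Fin m)} {a p xs : EuclideanSpace ℝ (Fin n)}
    (ha : a ∈ X) (hp : p ∈ X) (hxs : xs ∈ X)
    (hdrift : (1/2)*‖Qn‖^2 ≤ (1/2)*‖q‖^2 + ⟪q, g p⟫ + ‖g p‖^2)
    (hcnn : ∀ k, 0 ≤ q k + g a k)
    (hmin1 : ∀ w ∈ X,
      f p + ⟪q + g a, g p⟫ + α*‖p - a‖^2 ≤ f w + ⟪q + g a, g w⟫ + α*‖w - a‖^2)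
    (hfeas : ∀ k : Fin m, g xs k ≤ 0) :
    f p + ((1/2)*‖Qn‖^2 + α*‖xs - p‖^2 - (1/2)*‖g p‖^2) ≤
      f xs + ((1/2)*‖q‖^2 + α*‖xs - a‖^2 - (1/2)*‖g a‖^2) := by
  have hαpos : 0 < α := lt_of_le_of_lt (by positivity) hα
  have hid := innid_lemma q (g a) (g p)
  have hlip2 : ‖g p - g a‖^2 ≤ β^2 * ‖p - a‖^2 := by
    have h1 := hLip p hp a ha
    nlinarith [norm_nonneg (g p - g a), norm_nonneg (p - a)]
  have hcnn' : ∀ k, 0 ≤ (q + g a) k := by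
    intro k; simpa [PiLp.add_apply] using hcnn k
  have hsm := strong_min hXconv hαpos hp hxs
    (h := fun z => f z + ⟪q + g a, g z⟫) (a := a)
    (conv_comb_lemma hf hg hcnn' hp hxs)
    (fun w hw => hmin1 w hw)
  have hinnle : ⟪q + g a, g xs⟫ ≤ 0 := by
    rw [inner_eq_sum]
    apply Finset.sum_nonpos
    intro k _
    exact mul_nonpos_of_nonneg_of_nonpos (hcnn' k) (hfeas k)
  have habs : β^2 * ‖p - a‖^2 ≤ 2*α*‖p - a‖^2 := by
    nlinarith [sq_nonneg ‖p - a‖]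
  linarith

lemma tail_lemma {n m : ℕ} {X : Set (EuclideanSpace ℝ (Fin n))}
    {g : EuclideanSpace ℝ (Fin n) → EuclideanSpace ℝ (Fin m)}
    {β α : ℝ} (hα : β ^ 2 / 2 < α)
    (hLip : ∀ u ∈ X, ∀ v ∈ X, ‖g u - g v‖ ≤ β * ‖u - v‖)
    {xs : EuclideanSpace ℝ (Fin n)} (hxs : xs ∈ X) :
    ∀ w ∈ X, (1/2)*‖g w‖^2 - α*‖xs - w‖^2 ≤ α / (2*α - β^2) * ‖g xs‖^2 := by
  have h2αβ : 0 < 2*α - β^2 := by nlinarith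
  intro w hw
  have hβw : ‖g w - g xs‖ ≤ β * ‖w - xs‖ := hLip w hw xs hxs
  have htri : ‖g w‖ ≤ ‖g xs‖ + β*‖w - xs‖ := by
    calc ‖g w‖ = ‖g xs + (g w - g xs)‖ := by rw [add_sub_cancel]
      _ ≤ ‖g xs‖ + ‖g w - g xs‖ := norm_add_le _ _
      _ ≤ ‖g xs‖ + β*‖w - xs‖ := by linarith
  have hD2 : ‖g w‖^2 ≤ (‖g xs‖ + β*‖w - xs‖)^2 := by
    nlinarith [norm_nonneg (g w), htri]
  have hs : ‖xs - w‖ = ‖w - xs‖ := norm_sub_rev xs w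
  have hfrac : α / (2*α - β^2) * ‖g xs‖^2 = (α * ‖g xs‖^2) / (2*α - β^2) := by ring
  rw [hs, hfrac, le_div_iff₀ h2αβ]
  have hident : α*‖g xs‖^2 - ((1/2)*‖g w‖^2 - α*‖w - xs‖^2)*(2*α - β^2)
      = (2*α - β^2)/2 * ((‖g xs‖ + β*‖w - xs‖)^2 - ‖g w‖^2)
        + (1/2)*(β*‖g xs‖ - (2*α - β^2)*‖w - xs‖)^2 := by ring
  have hp1 : 0 ≤ (2*α - β^2)/2 * ((‖g xs‖ + β*‖w - xs‖)^2 - ‖g w‖^2) :=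
    mul_nonneg (by linarith) (by linarith)
  have hp2 : 0 ≤ (1/2)*(β*‖g xs‖ - (2*α - β^2)*‖w - xs‖)^2 := by positivity
  linarith [hident, hp1, hp2]

theorem alg1_objective_sum_bound_strict
    {n m : ℕ}
    (X : Set (EuclideanSpace ℝ (Fin n))) (hXconv : Convex ℝ X) (hXcl : IsClosed X)
    (f : EuclideanSpace ℝ (Fin n) → ℝ) (hf : ConvexOn ℝ X f) (hfc : ContinuousOn f X)
    (g : EuclideanSpace ℝ (Fin n) → EuclideanSpace ℝ (Fin m))
    (hg : ∀ k : Fin m, ConvexOn ℝ X (fun z => g z k))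
    (β : ℝ) (hLip : ∀ u ∈ X, ∀ v ∈ X, ‖g u - g v‖ ≤ β * ‖u - v‖)
    (α : ℝ) (hα : β ^ 2 / 2 < α)
    (x : ℤ → EuclideanSpace ℝ (Fin n)) (hxm1 : x (-1) ∈ X)
    (Q : ℕ → EuclideanSpace ℝ (Fin m))
    (hQ0 : ∀ k : Fin m, Q 0 k = max 0 (-(g (x (-1)) k)))
    (hxmem : ∀ t : ℕ, x t ∈ X)
    (hmin : ∀ t : ℕ, ∀ z ∈ X,
      f (x t) + ⟪Q t + g (x ((t : ℤ) - 1)), g (x t)⟫ + α * ‖x t - x ((t : ℤ) - 1)‖ ^ 2 ≤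
        f z + ⟪Q t + g (x ((t : ℤ) - 1)), g z⟫ + α * ‖z - x ((t : ℤ) - 1)‖ ^ 2)
    (hQrec : ∀ (t : ℕ) (k : Fin m),
      Q (t + 1) k = max (-(g (x t) k)) (Q t k + g (x t) k))
    (xs : EuclideanSpace ℝ (Fin n)) (hxs : xs ∈ X)
    (hfeas : ∀ k : Fin m, g xs k ≤ 0)
    (hopt : ∀ z ∈ X, (∀ k : Fin m, g z k ≤ 0) → f xs ≤ f z)
    :
    ∀ t : ℕ, 1 ≤ t → ∑ τ ∈ Finset.range t, f (x τ) ≤ (t : ℝ) * f xs + α * ‖xs - x (-1)‖ ^ 2 + (α / (2 * α - β ^ 2)) * ‖g xs‖ ^ 2 - (1 / 2) * ‖Q t‖ ^ 2 := by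
  have hymem : ∀ t : ℕ, x ((t:ℤ)-1) ∈ X := by
    intro t
    match t with
    | 0 => simpa using hxm1
    | Nat.succ s =>
      have hc : ((s+1:ℕ):ℤ) - 1 = (s:ℤ) := by push_cast; ring
      rw [hc]; exact hxmem s
  have hcnn : ∀ (t : ℕ) (k : Fin m), 0 ≤ Q t k + g (x ((t:ℤ)-1)) k := by
    intro t k
    match t with
    | 0 =>
      simp only [Nat.cast_zero, zero_sub]
      rw [hQ0 k]
      have := le_max_right 0 (-(g (x (-1)) k))
      linarith
    | Nat.succ s =>
      have hc : ((s+1:ℕ):ℤ) - 1 = (s:ℤ) := by push_cast; ring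
      rw [hc, hQrec s k]
      have := le_max_left (-(g (x (s:ℤ)) k)) (Q s k + g (x (s:ℤ)) k)
      linarith
  have step : ∀ t : ℕ,
      f (x t) + ((1/2)*‖Q (t+1)‖^2 + α*‖xs - x t‖^2 - (1/2)*‖g (x t)‖^2) ≤
        f xs + ((1/2)*‖Q t‖^2 + α*‖xs - x ((t:ℤ)-1)‖^2 - (1/2)*‖g (x ((t:ℤ)-1))‖^2) :=
    fun t => step_lemma hXconv hf hg hα hLip (hymem t) (hxmem t) hxs
      (drift_lemma Q (fun s => g (x s)) hQrec t) (hcnn t)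
      (fun w hw => hmin t w hw) hfeas
  have tele : ∀ t : ℕ,
      ∑ τ ∈ Finset.range t, f (x τ) +
        ((1/2)*‖Q t‖^2 + α*‖xs - x ((t:ℤ)-1)‖^2 - (1/2)*‖g (x ((t:ℤ)-1))‖^2) ≤
      (t:ℝ) * f xs + ((1/2)*‖Q 0‖^2 + α*‖xs - x (-1)‖^2 - (1/2)*‖g (x (-1))‖^2) := by
    intro t
    induction t with
    | zero => simp
    | succ s ih =>
      have hst := step s
      have hc : ((s+1:ℕ):ℤ) - 1 = (s:ℤ) := by push_cast; ring
      rw [Finset.sum_range_succ, hc]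
      push_cast
      linarith
  have hQ0b : (1/2)*‖Q 0‖^2 ≤ (1/2)*‖g (x (-1))‖^2 := by
    rw [normsq_eq_sum, normsq_eq_sum, Finset.mul_sum, Finset.mul_sum]
    apply Finset.sum_le_sum
    intro k _
    rw [hQ0 k]
    rcases le_total 0 (-(g (x (-1)) k)) with hc | hc
    · rw [max_eq_right hc]; nlinarith
    · rw [max_eq_left hc]; nlinarith
  intro t ht
  have h1 := tele t
  have h2 := tail_lemma hα hLip hxs (x ((t:ℤ)-1)) (hymem t)
  linarith
end

section
/- Consider Algorithm 1 applied to the convex program min{f(x) : g_k(x) ≤ 0 ∀k ∈ {1,…,m}, x ∈ 𝒳}. Let x* ∈ 𝒳 be an optimal solution and suppose λ* ∈ ℝᵐ is a Lagrange multiplier vector attaining strong duality: λ*_k ≥ 0 for all k, and f(x*) ≤ f(x) + ∑_{k=1}^m λ*_k g_k(x) for all x ∈ 𝒳. Then for all t ≥ 1, ∑_{τ=0}^{t−1} f(x(τ)) ≥ t·f(x*) − ‖λ*‖·‖Q(t)‖. -/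
open scoped RealInnerProductSpace

theorem alg1_objective_sum_lower_bound
    {n m : ℕ}
    (X : Set (EuclideanSpace ℝ (Fin n))) (hXconv : Convex ℝ X) (hXcl : IsClosed X)
    (f : EuclideanSpace ℝ (Fin n) → ℝ) (hf : ConvexOn ℝ X f) (hfc : ContinuousOn f X)
    (g : EuclideanSpace ℝ (Fin n) → EuclideanSpace ℝ (Fin m))
    (hg : ∀ k : Fin m, ConvexOn ℝ X (fun z => g z k))
    (β : ℝ) (hLip : ∀ u ∈ X, ∀ v ∈ X, ‖g u - g v‖ ≤ β * ‖u - v‖)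
    (α : ℝ) (hα : 0 < α)
    (x : ℤ → EuclideanSpace ℝ (Fin n)) (hxm1 : x (-1) ∈ X)
    (Q : ℕ → EuclideanSpace ℝ (Fin m))
    (hQ0 : ∀ k : Fin m, Q 0 k = max 0 (-(g (x (-1)) k)))
    (hxmem : ∀ t : ℕ, x t ∈ X)
    (hmin : ∀ t : ℕ, ∀ z ∈ X,
      f (x t) + ⟪Q t + g (x ((t : ℤ) - 1)), g (x t)⟫ + α * ‖x t - x ((t : ℤ) - 1)‖ ^ 2 ≤
        f z + ⟪Q t + g (x ((t : ℤ) - 1)), g z⟫ + α * ‖z - x ((t : ℤ) - 1)‖ ^ 2)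
    (hQrec : ∀ (t : ℕ) (k : Fin m),
      Q (t + 1) k = max (-(g (x t) k)) (Q t k + g (x t) k))
    (xs : EuclideanSpace ℝ (Fin n)) (hxs : xs ∈ X)
    (hfeas : ∀ k : Fin m, g xs k ≤ 0)
    (hopt : ∀ z ∈ X, (∀ k : Fin m, g z k ≤ 0) → f xs ≤ f z)
    (lam : EuclideanSpace ℝ (Fin m)) (hlam : ∀ k : Fin m, 0 ≤ lam k)
    (hsd : ∀ z ∈ X, f xs ≤ f z + ∑ k : Fin m, lam k * g z k)
    :
    ∀ t : ℕ, 1 ≤ t → (t : ℝ) * f xs - ‖lam‖ * ‖Q t‖ ≤ ∑ τ ∈ Finset.range t, f (x τ) := by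
  have hQnn : ∀ t : ℕ, ∀ k : Fin m, 0 ≤ Q t k := by
    intro t
    induction t with
    | zero => intro k; rw [hQ0]; exact le_max_left _ _
    | succ s ih =>
      intro k
      rw [hQrec]
      rcases le_total 0 (g (x s) k) with h | h
      · exact le_max_of_le_right (add_nonneg (ih k) h)
      · exact le_max_of_le_left (neg_nonneg.mpr h)
  have hsum : ∀ t : ℕ, ∀ k : Fin m, ∑ τ ∈ Finset.range t, g (x τ) k ≤ Q t k := by
    intro t
    induction t with
    | zero => intro k; simpa using hQnn 0 k
    | succ s ih =>
      intro k
      rw [Finset.sum_range_succ, hQrec]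
      exact le_trans (add_le_add_left (ih k) _) (le_max_right _ _)
  intro t _
  have h1 : (t : ℝ) * f xs ≤ (∑ τ ∈ Finset.range t, f (x τ)) +
      ∑ k : Fin m, lam k * Q t k := by
    calc (t : ℝ) * f xs = ∑ τ ∈ Finset.range t, f xs := by
          rw [Finset.sum_const, Finset.card_range, nsmul_eq_mul]
      _ ≤ ∑ τ ∈ Finset.range t, (f (x τ) + ∑ k : Fin m, lam k * g (x τ) k) := by
          refine Finset.sum_le_sum fun τ _ => hsd _ (hxmem τ)
      _ = (∑ τ ∈ Finset.range t, f (x τ)) +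
          ∑ k : Fin m, lam k * ∑ τ ∈ Finset.range t, g (x τ) k := by
          rw [Finset.sum_add_distrib, Finset.sum_comm]
          simp [Finset.mul_sum]
      _ ≤ _ := by
          refine add_le_add_right (Finset.sum_le_sum fun k _ =>
            mul_le_mul_of_nonneg_left (hsum t k) (hlam k)) _
  have h2 : ∑ k : Fin m, lam k * Q t k ≤ ‖lam‖ * ‖Q t‖ := by
    have := real_inner_le_norm lam (Q t)
    rw [PiLp.inner_apply] at this
    refine le_trans (le_of_eq (Finset.sum_congr rfl fun k _ => ?_)) this
    rw [RCLike.inner_apply, conj_trivial]; ring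
  linarith
end

section
/- Consider Algorithm 1 applied to the convex program min{f(x) : g_k(x) ≤ 0 ∀k ∈ {1,…,m}, x ∈ 𝒳} with parameter α > β²/2, where β is the Lipschitz modulus of g on 𝒳. Let x* ∈ 𝒳 be an optimal solution and suppose λ* ∈ ℝᵐ is a Lagrange multiplier vector attaining strong duality (λ*_k ≥ 0 for all k and f(x*) ≤ f(x) + ∑_k λ*_k g_k(x) for all x ∈ 𝒳). Then for all t ≥ 1, ‖Q(t)‖ ≤ 2‖λ*‖ + √(2α)·‖x* − x(−1)‖ + √(α/(α − β²/2))·‖g(x*)‖. -/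
open scoped RealInnerProductSpace

private lemma sqrt_add_le' {a b : ℝ} (ha : 0 ≤ a) (hb : 0 ≤ b) :
    Real.sqrt (a + b) ≤ Real.sqrt a + Real.sqrt b := by
  have h : a + b ≤ (Real.sqrt a + Real.sqrt b)^2 := by
    nlinarith [Real.sq_sqrt ha, Real.sq_sqrt hb, Real.sqrt_nonneg a, Real.sqrt_nonneg b,
      mul_nonneg (Real.sqrt_nonneg a) (Real.sqrt_nonneg b)]
  calc Real.sqrt (a + b) ≤ Real.sqrt ((Real.sqrt a + Real.sqrt b)^2) := Real.sqrt_le_sqrt h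
    _ = Real.sqrt a + Real.sqrt b := Real.sqrt_sq (by positivity)

private lemma quad_bound {q l K : ℝ} (hq : 0 ≤ q) (hl : 0 ≤ l) (hK : 0 ≤ K)
    (h : q^2/2 ≤ l*q + K) : q ≤ 2*l + Real.sqrt (2*K) := by
  have h1 : (q - l)^2 ≤ l^2 + 2*K := by nlinarith
  have h2 : q - l ≤ Real.sqrt (l^2 + 2*K) := by
    calc q - l ≤ |q - l| := le_abs_self _
      _ = Real.sqrt ((q-l)^2) := (Real.sqrt_sq_eq_abs _).symm
      _ ≤ Real.sqrt (l^2 + 2*K) := Real.sqrt_le_sqrt h1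
  have h3 : Real.sqrt (l^2 + 2*K) ≤ l + Real.sqrt (2*K) := by
    have := sqrt_add_le' (sq_nonneg l) (by linarith : (0:ℝ) ≤ 2*K)
    rwa [Real.sqrt_sq hl] at this
  linarith

private lemma pushback {E : Type*} [NormedAddCommGroup E] [InnerProductSpace ℝ E]
    {X : Set E} (hX : Convex ℝ X) {h : E → ℝ}
    (hh : ∀ u ∈ X, ∀ v ∈ X, ∀ a b : ℝ, 0 ≤ a → 0 ≤ b → a + b = 1 →
      h (a • u + b • v) ≤ a * h u + b * h v)
    {α : ℝ} (hα : 0 < α) (p : E) {x₀ : E} (hx₀ : x₀ ∈ X)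
    (hm : ∀ z ∈ X, h x₀ + α * ‖x₀ - p‖^2 ≤ h z + α * ‖z - p‖^2)
    {z : E} (hz : z ∈ X) :
    h x₀ + α * ‖x₀ - p‖^2 + α * ‖z - x₀‖^2 ≤ h z + α * ‖z - p‖^2 := by
  set C : ℝ := α * ‖z - x₀‖^2 with hCdef
  have hC : 0 ≤ C := by positivity
  have key : ∀ θ : ℝ, 0 < θ → θ ≤ 1 →
      (1 - θ) * C ≤ h z + α * ‖z - p‖^2 - (h x₀ + α * ‖x₀ - p‖^2) := by
    intro θ hθ0 hθ1
    set w : E := θ • z + (1 - θ) • x₀ with hwdef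
    have hwX : w ∈ X := hX hz hx₀ hθ0.le (by linarith) (by ring)
    have hmw := hm w hwX
    have hhw := hh z hz x₀ hx₀ θ (1 - θ) hθ0.le (by linarith) (by ring)
    have hwp : w - p = θ • (z - p) + (1 - θ) • (x₀ - p) := by
      rw [hwdef]; module
    have hzx : z - x₀ = (z - p) - (x₀ - p) := by abel
    have hexp : ∀ v : E, ‖v‖^2 = ⟪v, v⟫ := fun v => (real_inner_self_eq_norm_sq v).symm
    have hnw : ‖w - p‖^2 = θ*‖z-p‖^2 + (1-θ)*‖x₀-p‖^2 - θ*(1-θ)*‖z-x₀‖^2 := by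
      rw [hwp, hzx, hexp, hexp (z-p), hexp (x₀-p), hexp ((z-p) - (x₀-p))]
      simp only [inner_add_left, inner_add_right, inner_sub_left, inner_sub_right,
        real_inner_smul_left, real_inner_smul_right]
      rw [real_inner_comm p z, real_inner_comm p x₀, real_inner_comm x₀ z]
      ring
    -- combine: h x₀ + α‖x₀-p‖² ≤ h w + α‖w-p‖² ≤ θ h z + (1-θ) h x₀ + α(...)
    rw [← hwdef] at hhw
    have hfin : θ * ((1-θ)*C) ≤ θ * (h z + α * ‖z - p‖^2 - (h x₀ + α * ‖x₀ - p‖^2)) := by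
      rw [hnw] at hmw
      rw [hCdef]
      nlinarith [hmw, hhw]
    exact (mul_le_mul_iff_right₀ hθ0).mp hfin
  have hgoal : C ≤ h z + α * ‖z - p‖^2 - (h x₀ + α * ‖x₀ - p‖^2) := by
    apply le_of_forall_pos_le_add
    intro ε hε
    have hθ0 : 0 < min 1 (ε / (C + 1)) := lt_min one_pos (by positivity)
    have hθ1 : min 1 (ε / (C + 1)) ≤ 1 := min_le_left _ _
    have hk := key _ hθ0 hθ1
    have hθC : (min 1 (ε / (C + 1))) * C ≤ ε := by
      have h1 : min 1 (ε / (C + 1)) ≤ ε / (C + 1) := min_le_right _ _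
      have h2 : (0:ℝ) < C + 1 := by linarith
      have := mul_le_mul_of_nonneg_right h1 hC
      calc (min 1 (ε / (C + 1))) * C ≤ (ε / (C + 1)) * C := this
        _ ≤ ε := by rw [div_mul_eq_mul_div, div_le_iff₀ h2]; nlinarith
    linarith
  linarith

set_option maxHeartbeats 1000000

theorem alg1_virtual_queue_bound
    {n m : ℕ}
    (X : Set (EuclideanSpace ℝ (Fin n))) (hXconv : Convex ℝ X) (hXcl : IsClosed X)
    (f : EuclideanSpace ℝ (Fin n) → ℝ) (hf : ConvexOn ℝ X f) (hfc : ContinuousOn f X)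
    (g : EuclideanSpace ℝ (Fin n) → EuclideanSpace ℝ (Fin m))
    (hg : ∀ k : Fin m, ConvexOn ℝ X (fun z => g z k))
    (β : ℝ) (hLip : ∀ u ∈ X, ∀ v ∈ X, ‖g u - g v‖ ≤ β * ‖u - v‖)
    (α : ℝ) (hα : β ^ 2 / 2 < α)
    (x : ℤ → EuclideanSpace ℝ (Fin n)) (hxm1 : x (-1) ∈ X)
    (Q : ℕ → EuclideanSpace ℝ (Fin m))
    (hQ0 : ∀ k : Fin m, Q 0 k = max 0 (-(g (x (-1)) k)))
    (hxmem : ∀ t : ℕ, x t ∈ X)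
    (hmin : ∀ t : ℕ, ∀ z ∈ X,
      f (x t) + ⟪Q t + g (x ((t : ℤ) - 1)), g (x t)⟫ + α * ‖x t - x ((t : ℤ) - 1)‖ ^ 2 ≤
        f z + ⟪Q t + g (x ((t : ℤ) - 1)), g z⟫ + α * ‖z - x ((t : ℤ) - 1)‖ ^ 2)
    (hQrec : ∀ (t : ℕ) (k : Fin m),
      Q (t + 1) k = max (-(g (x t) k)) (Q t k + g (x t) k))
    (xs : EuclideanSpace ℝ (Fin n)) (hxs : xs ∈ X)
    (hfeas : ∀ k : Fin m, g xs k ≤ 0)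
    (hopt : ∀ z ∈ X, (∀ k : Fin m, g z k ≤ 0) → f xs ≤ f z)
    (lam : EuclideanSpace ℝ (Fin m)) (hlam : ∀ k : Fin m, 0 ≤ lam k)
    (hsd : ∀ z ∈ X, f xs ≤ f z + ∑ k : Fin m, lam k * g z k)
    :
    ∀ t : ℕ, 1 ≤ t → ‖Q t‖ ≤ 2 * ‖lam‖ + Real.sqrt (2 * α) * ‖xs - x (-1)‖ + Real.sqrt (α / (α - β ^ 2 / 2)) * ‖g xs‖ := by
  have hβ2 : (0:ℝ) ≤ β^2/2 := by positivity
  have hαpos : 0 < α := lt_of_le_of_lt hβ2 hα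
  have hac : 0 < α - β^2/2 := by linarith
  have hinner : ∀ (a b : EuclideanSpace ℝ (Fin m)), ⟪a,b⟫ = ∑ k, a k * b k := by
    intro a b; simp [PiLp.inner_apply, RCLike.inner_apply]; exact Finset.sum_congr rfl (fun _ _ => mul_comm _ _)
  have hnormsq : ∀ (v : EuclideanSpace ℝ (Fin m)), ‖v‖^2 = ∑ k, (v k)^2 := by
    intro v; rw [← real_inner_self_eq_norm_sq]; simp [PiLp.inner_apply, RCLike.inner_apply, sq]
    rw [← real_inner_self_eq_norm_mul_norm, hinner]
  have hxmemZ : ∀ τ : ℕ, x ((τ:ℤ) - 1) ∈ X := by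
    intro τ
    cases τ with
    | zero => simpa using hxm1
    | succ k =>
        have hc : ((k+1:ℕ):ℤ) - 1 = ((k:ℕ):ℤ) := by push_cast; ring
        rw [hc]; exact hxmem k
  have hQnonneg : ∀ τ : ℕ, ∀ k, 0 ≤ Q τ k := by
    intro τ
    induction τ with
    | zero => intro k; rw [hQ0 k]; exact le_max_left _ _
    | succ τ ih =>
        intro k
        rw [hQrec τ k]
        rcases le_total 0 (g (x τ) k) with h|h
        · exact le_max_of_le_right (by linarith [ih k])
        · exact le_max_of_le_left (by linarith)
  have hQg : ∀ τ : ℕ, ∀ k, 0 ≤ Q τ k + g (x ((τ:ℤ)-1)) k := by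
    intro τ k
    cases τ with
    | zero =>
        have hc : ((0:ℕ):ℤ) - 1 = (-1 : ℤ) := by norm_num
        rw [hc, hQ0 k]
        have := le_max_right (0:ℝ) (-(g (x (-1)) k))
        linarith
    | succ τ =>
        have hc : ((τ+1:ℕ):ℤ) - 1 = ((τ:ℕ):ℤ) := by push_cast; ring
        rw [hc, hQrec τ k]
        have := le_max_left (-(g (x τ) k)) (Q τ k + g (x τ) k)
        linarith
  have hQsum : ∀ (T:ℕ) (k : Fin m), ∑ τ ∈ Finset.range T, g (x τ) k ≤ Q T k := by
    intro T
    induction T with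
    | zero => intro k; simpa using hQnonneg 0 k
    | succ s ih =>
        intro k
        rw [Finset.sum_range_succ, hQrec s k]
        have h2 := le_max_right (-(g (x s) k)) (Q s k + g (x s) k)
        linarith [ih k]
  -- drift inequality
  have hdrift : ∀ τ:ℕ, ‖Q (τ+1)‖^2 ≤ ‖Q τ‖^2 + 2*⟪Q τ, g (x τ)⟫ + 2*‖g (x τ)‖^2 := by
    intro τ
    have hcomp : ∀ k, (Q (τ+1) k)^2 ≤ (Q τ k + g (x τ) k)^2 + (g (x τ) k)^2 := by
      intro k
      rw [hQrec τ k]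
      rcases max_cases (-(g (x τ) k)) (Q τ k + g (x τ) k) with ⟨h1,h2⟩|⟨h1,h2⟩ <;> rw [h1] <;>
        nlinarith [sq_nonneg (Q τ k + g (x τ) k), sq_nonneg (g (x τ) k)]
    have hsum : ∑ k, (Q (τ+1) k)^2 ≤ ∑ k, ((Q τ k + g (x τ) k)^2 + (g (x τ) k)^2) :=
      Finset.sum_le_sum (fun k _ => hcomp k)
    have hexpand : ∑ k, ((Q τ k + g (x τ) k)^2 + (g (x τ) k)^2)
        = (∑ k, (Q τ k)^2) + 2*(∑ k, Q τ k * g (x τ) k) + 2*(∑ k, (g (x τ) k)^2) := by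
      rw [Finset.mul_sum, Finset.mul_sum, ← Finset.sum_add_distrib, ← Finset.sum_add_distrib]
      apply Finset.sum_congr rfl
      intro k _; ring
    rw [hnormsq, hnormsq, hnormsq, hinner]
    rw [hexpand] at hsum
    exact hsum
  -- per-step key inequality
  have key : ∀ τ:ℕ, ‖Q (τ+1)‖^2/2 + α*‖xs - x τ‖^2 - ‖g (x τ)‖^2/2 ≤
      ‖Q τ‖^2/2 + α*‖xs - x ((τ:ℤ)-1)‖^2 - ‖g (x ((τ:ℤ)-1))‖^2/2 + (f xs - f (x τ)) := by
    intro τ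
    have hh : ∀ u ∈ X, ∀ v ∈ X, ∀ a b : ℝ, 0 ≤ a → 0 ≤ b → a + b = 1 →
        (fun z => f z + ⟪Q τ + g (x ((τ:ℤ)-1)), g z⟫) (a • u + b • v) ≤
          a * (f u + ⟪Q τ + g (x ((τ:ℤ)-1)), g u⟫) + b * (f v + ⟪Q τ + g (x ((τ:ℤ)-1)), g v⟫) := by
      intro u hu v hv a b ha hb hab
      have hfc := hf.2 hu hv ha hb hab
      rw [smul_eq_mul, smul_eq_mul] at hfc
      have hgc : ∀ k, g (a • u + b • v) k ≤ a * g u k + b * g v k := by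
        intro k
        have := (hg k).2 hu hv ha hb hab
        simpa using this
      have hsum : ∑ k, (Q τ + g (x ((τ:ℤ)-1))) k * g (a • u + b • v) k ≤
          a * ∑ k, (Q τ + g (x ((τ:ℤ)-1))) k * g u k +
          b * ∑ k, (Q τ + g (x ((τ:ℤ)-1))) k * g v k := by
        rw [Finset.mul_sum, Finset.mul_sum, ← Finset.sum_add_distrib]
        apply Finset.sum_le_sum
        intro k _
        have hw : 0 ≤ (Q τ + g (x ((τ:ℤ)-1))) k := by
          simpa [PiLp.add_apply] using hQg τ k
        calc (Q τ + g (x ((τ:ℤ)-1))) k * g (a • u + b • v) k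
            ≤ (Q τ + g (x ((τ:ℤ)-1))) k * (a * g u k + b * g v k) :=
              mul_le_mul_of_nonneg_left (hgc k) hw
          _ = a * ((Q τ + g (x ((τ:ℤ)-1))) k * g u k) + b * ((Q τ + g (x ((τ:ℤ)-1))) k * g v k) := by
              ring
      simp only []
      rw [hinner, hinner, hinner]
      linarith
    have hpb : f (x τ) + ⟪Q τ + g (x ((τ:ℤ)-1)), g (x τ)⟫ + α * ‖x τ - x ((τ:ℤ)-1)‖^2
        + α * ‖xs - x τ‖^2 ≤
        f xs + ⟪Q τ + g (x ((τ:ℤ)-1)), g xs⟫ + α * ‖xs - x ((τ:ℤ)-1)‖^2 := by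
      have := pushback hXconv (h := fun z => f z + ⟪Q τ + g (x ((τ:ℤ)-1)), g z⟫) hh hαpos
        (x ((τ:ℤ)-1)) (hxmem τ) (fun z hz => hmin τ z hz) hxs
      simpa using this
    have hwgs : ⟪Q τ + g (x ((τ:ℤ)-1)), g xs⟫ ≤ 0 := by
      rw [hinner]
      apply Finset.sum_nonpos
      intro k _
      have h1 : 0 ≤ (Q τ + g (x ((τ:ℤ)-1))) k := by simpa [PiLp.add_apply] using hQg τ k
      have h2 := mul_nonneg h1 (neg_nonneg.mpr (hfeas k))
      nlinarith
    have hisplit : ⟪Q τ, g (x τ)⟫ = ⟪Q τ + g (x ((τ:ℤ)-1)), g (x τ)⟫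
        - ⟪g (x ((τ:ℤ)-1)), g (x τ)⟫ := by
      rw [inner_add_left]; ring
    have hlip2 : ‖g (x τ) - g (x ((τ:ℤ)-1))‖^2 ≤ β^2 * ‖x τ - x ((τ:ℤ)-1)‖^2 := by
      have h1 := hLip (x τ) (hxmem τ) (x ((τ:ℤ)-1)) (hxmemZ τ)
      nlinarith [norm_nonneg (g (x τ) - g (x ((τ:ℤ)-1))), norm_nonneg (x (τ:ℤ) - x ((τ:ℤ)-1))]
    have hns : ‖g (x τ) - g (x ((τ:ℤ)-1))‖^2 = ‖g (x τ)‖^2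
        - 2*⟪g (x τ), g (x ((τ:ℤ)-1))⟫ + ‖g (x ((τ:ℤ)-1))‖^2 := norm_sub_sq_real _ _
    have hcomm : ⟪g (x ((τ:ℤ)-1)), g (x τ)⟫ = ⟪g (x τ), g (x ((τ:ℤ)-1))⟫ := real_inner_comm _ _
    have hprod : 0 ≤ (α - β^2/2) * ‖x τ - x ((τ:ℤ)-1)‖^2 :=
      mul_nonneg (by linarith) (sq_nonneg _)
    have hd := hdrift τ
    linarith [hd, hpb, hwgs, hisplit, hlip2, hns, hcomm, hprod]
  -- telescoped master inequality
  have hmaster : ∀ T:ℕ, ‖Q T‖^2/2 + α*‖xs - x ((T:ℤ)-1)‖^2 - ‖g (x ((T:ℤ)-1))‖^2/2 ≤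
      ‖Q 0‖^2/2 + α*‖xs - x (-1)‖^2 - ‖g (x (-1))‖^2/2 + ∑ τ ∈ Finset.range T, (f xs - f (x τ)) := by
    intro T
    induction T with
    | zero => norm_num
    | succ s ih =>
        have hc : ((s+1:ℕ):ℤ) - 1 = ((s:ℕ):ℤ) := by push_cast; ring
        rw [hc, Finset.sum_range_succ]
        have hk := key s
        linarith
  -- Q 0 bound
  have hQ0le : ‖Q 0‖^2 ≤ ‖g (x (-1))‖^2 := by
    rw [hnormsq, hnormsq]
    apply Finset.sum_le_sum
    intro k _
    rw [hQ0 k]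
    rcases max_cases (0:ℝ) (-(g (x (-1)) k)) with ⟨h1,h2⟩|⟨h1,h2⟩ <;> rw [h1] <;> nlinarith
  -- duality bound on the sum
  have hsum_le : ∀ T:ℕ, ∑ τ ∈ Finset.range T, (f xs - f (x τ)) ≤ ‖lam‖ * ‖Q T‖ := by
    intro T
    calc ∑ τ ∈ Finset.range T, (f xs - f (x τ))
        ≤ ∑ τ ∈ Finset.range T, ∑ k, lam k * g (x τ) k :=
          Finset.sum_le_sum (fun τ _ => by have := hsd (x τ) (hxmem τ); linarith)
      _ = ∑ k, ∑ τ ∈ Finset.range T, lam k * g (x τ) k := Finset.sum_comm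
      _ = ∑ k, lam k * ∑ τ ∈ Finset.range T, g (x τ) k := by
          apply Finset.sum_congr rfl; intro k _; rw [Finset.mul_sum]
      _ ≤ ∑ k, lam k * Q T k :=
          Finset.sum_le_sum (fun k _ => mul_le_mul_of_nonneg_left (hQsum T k) (hlam k))
      _ = ⟪lam, Q T⟫ := (hinner lam (Q T)).symm
      _ ≤ ‖lam‖ * ‖Q T‖ := real_inner_le_norm _ _
  intro t _
  -- final norm/Lipschitz bound at index t-1
  obtain ⟨G, hG⟩ : ∃ G, G = ‖g xs‖ := ⟨_, rfl⟩
  obtain ⟨s, hs⟩ : ∃ s, s = ‖xs - x ((t:ℤ)-1)‖ := ⟨_, rfl⟩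
  obtain ⟨bt, hbt⟩ : ∃ bt, bt = ‖g (x ((t:ℤ)-1))‖ := ⟨_, rfl⟩
  have hbts : bt ≤ G + β * s := by
    have h2 : bt - G ≤ ‖g (x ((t:ℤ)-1)) - g xs‖ := by
      rw [hbt, hG]; exact norm_sub_norm_le _ _
    have h3 : ‖g (x ((t:ℤ)-1)) - g xs‖ ≤ β * ‖x ((t:ℤ)-1) - xs‖ :=
      hLip _ (hxmemZ t) xs hxs
    have h4 : ‖x ((t:ℤ)-1) - xs‖ = s := by rw [hs, norm_sub_rev]
    rw [h4] at h3
    linarith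
  obtain ⟨R, hR⟩ : ∃ R, R = α*G^2/(2*(α-β^2/2)) := ⟨_, rfl⟩
  have hRnn : 0 ≤ R := by rw [hR]; positivity
  have hGnn : 0 ≤ G := by rw [hG]; exact norm_nonneg _
  have hH : bt^2/2 - α*s^2 ≤ R := by
    have hbtnn : 0 ≤ bt := by rw [hbt]; exact norm_nonneg _
    have hsnn : 0 ≤ s := by rw [hs]; exact norm_nonneg _
    have hbt2 : bt^2 ≤ (G + β*s)^2 := by nlinarith
    have hne : α*2 - β^2 ≠ 0 := by nlinarith
    have hReq : R * (2*(α - β^2/2)) = α*G^2 := by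
      rw [hR]; field_simp
    nlinarith [sq_nonneg (2*(α-β^2/2)*s - β*G), mul_pos hac hac, sq_nonneg G, sq_nonneg s]
  have hm := hmaster t
  have hd := hsum_le t
  have hfinal : ‖Q t‖^2/2 ≤ ‖lam‖ * ‖Q t‖ + (α*‖xs - x (-1)‖^2 + R) := by
    have hq0 : ‖Q 0‖^2/2 - ‖g (x (-1))‖^2/2 ≤ 0 := by linarith
    rw [← hs, ← hbt] at hm
    linarith
  have hK : 0 ≤ α*‖xs - x (-1)‖^2 + R := by positivity
  have hq := quad_bound (norm_nonneg (Q t)) (norm_nonneg lam) hK hfinal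
  have hsplit : Real.sqrt (2*(α*‖xs - x (-1)‖^2 + R)) ≤
      Real.sqrt (2*α) * ‖xs - x (-1)‖ + Real.sqrt (α/(α-β^2/2)) * G := by
    have hne : α - β^2/2 ≠ 0 := ne_of_gt hac
    have h1 : 2*(α*‖xs - x (-1)‖^2 + R) = 2*α*‖xs - x (-1)‖^2 + (α/(α-β^2/2))*G^2 := by
      rw [hR]; field_simp
    have h2 := sqrt_add_le' (show (0:ℝ) ≤ 2*α*‖xs - x (-1)‖^2 by positivity)
      (show (0:ℝ) ≤ (α/(α-β^2/2))*G^2 by rw [hG]; positivity)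
    have h3 : Real.sqrt (2*α*‖xs - x (-1)‖^2) = Real.sqrt (2*α) * ‖xs - x (-1)‖ := by
      rw [Real.sqrt_mul (by positivity) (‖xs - x (-1)‖^2), Real.sqrt_sq (norm_nonneg _)]
    have h4 : Real.sqrt ((α/(α-β^2/2))*G^2) = Real.sqrt (α/(α-β^2/2)) * G := by
      rw [Real.sqrt_mul (by positivity) (G^2), Real.sqrt_sq hGnn]
    rw [h1]
    calc Real.sqrt (2*α*‖xs - x (-1)‖^2 + (α/(α-β^2/2))*G^2)
        ≤ Real.sqrt (2*α*‖xs - x (-1)‖^2) + Real.sqrt ((α/(α-β^2/2))*G^2) := h2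
      _ = Real.sqrt (2*α) * ‖xs - x (-1)‖ + Real.sqrt (α/(α-β^2/2)) * G := by rw [h3, h4]
  rw [hG] at hsplit
  linarith
end
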